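/- Let n ≥ 1. There exists a constant N > 0, depending only on n, such that for every Borel set K ⊆ ℝ^n × ℝ one has cap(K) ≥ N · |K|^{n/(n+2)}, where |K| is the (n+1)-dimensional Lebesgue measure of K. -/

import Mathlib

open MeasureTheory Real Set Metric Filter
open scoped ENNReal

noncomputable section

/-- The space ℝ^n × ℝ (spatial × time). -/
abbrev Spc (n : ℕ) := EuclideanSpace ℝ (Fin n) × ℝ

/-- Parabolic cylinder C_r(Y) = B_r(y) × (s - r², s). -/
def pCyl (n : ℕ) (Y : Spc n) (r : ℝ) : Set (Spc n) :=
  (Metric.ball Y.1 r) ×ˢ (Set.Ioo (Y.2 - r ^ 2) Y.2)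

/-- |C_r|: the measure of a parabolic cylinder of radius r. -/
def cylVol (n : ℕ) (r : ℝ) : ENNReal :=
  volume (pCyl n ((0 : EuclideanSpace ℝ (Fin n)), (0 : ℝ)) r)

/-- The parabolic boundary of an open set Q. -/
def pBoundary (n : ℕ) (Q : Set (Spc n)) : Set (Spc n) :=
  {X | X ∈ frontier Q ∧ ∃ δ > (0 : ℝ), ∃ γ : ℝ → EuclideanSpace ℝ (Fin n),
    ContinuousOn γ (Set.Ico X.2 (X.2 + δ)) ∧ γ X.2 = X.1 ∧
    ∀ t ∈ Set.Ioo X.2 (X.2 + δ), (γ t, t) ∈ Q}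

/-- Condition (A): exterior measure condition. -/
def condA (n : ℕ) (Q : Set (Spc n)) (θ₀ : ℝ) : Prop :=
  ∀ X ∈ pBoundary n Q, ∀ r > (0 : ℝ),
    ENNReal.ofReal θ₀ * cylVol n r < volume (pCyl n X r \ Q)

/-- Parabolic distance. -/
def pDist (n : ℕ) (X Y : Spc n) : ℝ := max ‖X.1 - Y.1‖ (Real.sqrt |X.2 - Y.2|)

/-- The fundamental solution of the heat equation. -/
def heatF (n : ℕ) (x : EuclideanSpace ℝ (Fin n)) (t : ℝ) : ℝ :=
  if 0 < t then (4 * π * t) ^ (-(n : ℝ) / 2) * Real.exp (-‖x‖ ^ 2 / (4 * t)) else 0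

/-- Heat ball E(X, r). -/
def heatBall (n : ℕ) (X : Spc n) (r : ℝ) : Set (Spc n) :=
  {Y | r ≤ heatF n (X.1 - Y.1) (X.2 - Y.2)}

/-- Thermal capacity of a set. -/
def thermalCap (n : ℕ) (K : Set (Spc n)) : ENNReal :=
  sSup {m : ENNReal | ∃ μ : Measure (Spc n), IsFiniteMeasure μ ∧ μ Kᶜ = 0 ∧
    (∀ X : Spc n, ∫⁻ Y, ENNReal.ofReal (heatF n (X.1 - Y.1) (X.2 - Y.2)) ∂μ ≤ 1) ∧
    m = μ Set.univ}

/-- Heat shell {Y : a ≤ F(Y₀ - Y) ≤ b}. -/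
def heatShell (n : ℕ) (Y₀ : Spc n) (a b : ℝ) : Set (Spc n) :=
  {Y | a ≤ heatF n (Y₀.1 - Y.1) (Y₀.2 - Y.2) ∧ heatF n (Y₀.1 - Y.1) (Y₀.2 - Y.2) ≤ b}


/-- lower bound of thermal capacity by Lebesgue measure. -/
lemma heatF_nonneg (n : ℕ) (x : EuclideanSpace ℝ (Fin n)) (t : ℝ) : 0 ≤ heatF n x t := by
  unfold heatF; split <;> positivity

lemma measurable_heatF (n : ℕ) : Measurable (fun p : Spc n => heatF n p.1 p.2) := by
  unfold heatF
  apply Measurable.ite (measurableSet_lt measurable_const measurable_snd)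
  · exact (((measurable_const.mul measurable_snd)).pow measurable_const).mul
      (((measurable_fst.norm.pow measurable_const).neg.div
        (measurable_const.mul measurable_snd)).exp)
  · exact measurable_const

lemma integrable_gauss (n : ℕ) {b : ℝ} (hb : 0 < b) :
    Integrable (fun y : EuclideanSpace ℝ (Fin n) => rexp (-b * ‖y‖ ^ 2)) := by
  have h := (GaussianFourier.integrable_cexp_neg_mul_sq_norm_add
    (V := EuclideanSpace ℝ (Fin n)) (b := (b : ℂ)) (by simpa using hb) 0 0).re
  refine h.congr (Filter.Eventually.of_forall fun y => ?_)
  simp only [zero_mul, add_zero]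
  rw [show (-(b:ℂ) * (‖y‖:ℂ) ^ 2) = ((-b * ‖y‖^2 : ℝ) : ℂ) by push_cast; ring]
  simp only [RCLike.re_to_complex]
  exact Complex.exp_ofReal_re _

lemma lintegral_heatF (n : ℕ) (x : EuclideanSpace ℝ (Fin n)) {τ : ℝ} (hτ : 0 < τ) :
    ∫⁻ y, ENNReal.ofReal (heatF n (x - y) τ) = 1 := by
  have hmp : MeasurePreserving (fun y : EuclideanSpace ℝ (Fin n) => x - y) volume volume := by
    have := Measure.measurePreserving_add_right_neg (volume : Measure (EuclideanSpace ℝ (Fin n))) (-x)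
    convert this using 2 with y
    abel
  have hmeas : Measurable (fun y : EuclideanSpace ℝ (Fin n) => ENNReal.ofReal (heatF n y τ)) :=
    ((measurable_heatF n).comp (measurable_id.prodMk measurable_const)).ennreal_ofReal
  rw [hmp.lintegral_comp hmeas]
  have hb : (0:ℝ) < 1/(4*τ) := by positivity
  have hc : (0:ℝ) ≤ (4*π*τ) ^ (-(n:ℝ)/2) := by positivity
  have h1 : ∀ y : EuclideanSpace ℝ (Fin n),
      heatF n y τ = (4*π*τ) ^ (-(n:ℝ)/2) * rexp (-(1/(4*τ)) * ‖y‖^2) := by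
    intro y
    rw [heatF, if_pos hτ]
    congr 2
    field_simp
  simp only [h1]
  simp only [ENNReal.ofReal_mul hc]
  rw [lintegral_const_mul _ (by
    exact ((Real.measurable_exp.comp ((measurable_const.mul (measurable_norm.pow measurable_const))))).ennreal_ofReal)]
  rw [← MeasureTheory.ofReal_integral_eq_lintegral_ofReal (integrable_gauss n hb)
    (ae_of_all _ fun y => (Real.exp_pos _).le)]
  rw [GaussianFourier.integral_rexp_neg_mul_sq_norm hb, finrank_euclideanSpace_fin]
  rw [← ENNReal.ofReal_mul hc]
  rw [show π / (1/(4*τ)) = 4*π*τ by field_simp]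
  rw [← Real.rpow_add (by positivity), show (-(n:ℝ)/2 + (n:ℝ)/2) = 0 by ring, Real.rpow_zero,
    ENNReal.ofReal_one]

lemma heatF_le (n : ℕ) {T t : ℝ} (hT : 0 < T) (hTt : T ≤ t) (x : EuclideanSpace ℝ (Fin n)) :
    heatF n x t ≤ (4 * π * T) ^ (-(n : ℝ) / 2) := by
  have ht : 0 < t := hT.trans_le hTt
  have h4T : (0:ℝ) < 4 * π * T := mul_pos (by positivity) hT
  have h4t : (0:ℝ) < 4 * π * t := mul_pos (by positivity) ht
  have hexp : rexp (-‖x‖ ^ 2 / (4 * t)) ≤ 1 :=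
    Real.exp_le_one_iff.2 (div_nonpos_of_nonpos_of_nonneg (neg_nonpos.2 (by positivity))
      (by linarith))
  have hne : -(n : ℝ) / 2 ≤ 0 := by
    have : (0:ℝ) ≤ (n:ℝ) := Nat.cast_nonneg n
    linarith
  rw [heatF, if_pos ht]
  calc (4 * π * t) ^ (-(n : ℝ) / 2) * rexp (-‖x‖ ^ 2 / (4 * t))
      ≤ (4 * π * t) ^ (-(n : ℝ) / 2) * 1 :=
        mul_le_mul_of_nonneg_left hexp (Real.rpow_nonneg h4t.le _)
    _ = (4 * π * t) ^ (-(n : ℝ) / 2) := mul_one _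
    _ ≤ (4 * π * T) ^ (-(n : ℝ) / 2) :=
        Real.rpow_le_rpow_of_nonpos h4T (by nlinarith [pi_pos]) hne

lemma potential_le (n : ℕ) (K : Set (Spc n)) {T : ℝ} (hT : 0 < T) (X : Spc n) :
    ∫⁻ Y, ENNReal.ofReal (heatF n (X.1 - Y.1) (X.2 - Y.2)) ∂(volume.restrict K)
      ≤ ENNReal.ofReal T + ENNReal.ofReal ((4 * π * T) ^ (-(n:ℝ) / 2)) * volume K := by
  set φ : Spc n → ℝ≥0∞ := fun Y => ENNReal.ofReal (heatF n (X.1 - Y.1) (X.2 - Y.2)) with hφ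
  have hφm : Measurable φ :=
    ((measurable_heatF n).comp
      ((measurable_const.sub measurable_fst).prodMk
        (measurable_const.sub measurable_snd))).ennreal_ofReal
  set A : Set (Spc n) := univ ×ˢ Ioo (X.2 - T) X.2 with hA
  have hAm : MeasurableSet A := MeasurableSet.univ.prod measurableSet_Ioo
  have hpt : ∀ Y, φ Y ≤ A.indicator φ Y + ENNReal.ofReal ((4 * π * T) ^ (-(n:ℝ) / 2)) := by
    intro Y
    by_cases hY : Y ∈ A
    · rw [Set.indicator_of_mem hY]; exact le_self_add
    · rw [Set.indicator_of_notMem hY, zero_add]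
      simp only [hA, Set.mem_prod, Set.mem_univ, true_and, Set.mem_Ioo, not_and_or, not_lt] at hY
      rcases hY with h | h
      · exact ENNReal.ofReal_le_ofReal (heatF_le n hT (by linarith) _)
      · have h0 : heatF n (X.1 - Y.1) (X.2 - Y.2) = 0 := by
          rw [heatF, if_neg (by simp; linarith)]
        rw [hφ]; simp [h0]
  have hslab : ∫⁻ Y, A.indicator φ Y ≤ ENNReal.ofReal T := by
    calc ∫⁻ Y, A.indicator φ Y
        = ∫⁻ s, ∫⁻ y, A.indicator φ (y, s) := by
          rw [Measure.volume_eq_prod]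
          exact lintegral_prod_symm' _ (hφm.indicator hAm)
      _ ≤ ∫⁻ s, (Ioo (X.2 - T) X.2).indicator (fun _ => 1) s := by
          apply lintegral_mono
          intro s
          show ∫⁻ y, A.indicator φ (y, s) ≤ (Ioo (X.2 - T) X.2).indicator (fun _ => 1) s
          by_cases hs : s ∈ Ioo (X.2 - T) X.2
          · rw [Set.indicator_of_mem hs]
            have he : ∀ y, A.indicator φ (y, s) = φ (y, s) := fun y =>
              Set.indicator_of_mem (by rw [hA, Set.mem_prod]; exact ⟨Set.mem_univ _, hs⟩) _
            rw [lintegral_congr he]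
            have hτ : 0 < X.2 - s := by have := (Set.mem_Ioo.1 hs).2; linarith
            exact le_of_eq (lintegral_heatF n X.1 hτ)
          · have he : ∀ y : EuclideanSpace ℝ (Fin n), A.indicator φ (y, s) = (fun _ => (0:ℝ≥0∞)) y := by
              intro y
              apply Set.indicator_of_notMem
              rw [hA, Set.mem_prod]
              exact fun hmem => hs hmem.2
            rw [lintegral_congr he, lintegral_zero]
            exact zero_le
      _ = volume (Ioo (X.2 - T) X.2) := by
          rw [lintegral_indicator measurableSet_Ioo, setLIntegral_one]
      _ = ENNReal.ofReal T := by rw [Real.volume_Ioo]; congr 1; ring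
  calc ∫⁻ Y, φ Y ∂(volume.restrict K)
      ≤ ∫⁻ Y, (A.indicator φ Y + ENNReal.ofReal ((4 * π * T) ^ (-(n:ℝ)/2))) ∂(volume.restrict K) :=
        lintegral_mono hpt
    _ = (∫⁻ Y, A.indicator φ Y ∂(volume.restrict K))
        + ENNReal.ofReal ((4 * π * T) ^ (-(n:ℝ)/2)) * (volume.restrict K) univ := by
        rw [lintegral_add_right _ measurable_const, lintegral_const]
    _ ≤ (∫⁻ Y, A.indicator φ Y)
        + ENNReal.ofReal ((4 * π * T) ^ (-(n:ℝ)/2)) * volume K := by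
        refine add_le_add (lintegral_mono' Measure.restrict_le_self le_rfl) ?_
        rw [Measure.restrict_apply_univ]
    _ ≤ ENNReal.ofReal T + ENNReal.ofReal ((4 * π * T) ^ (-(n:ℝ)/2)) * volume K :=
        add_le_add hslab le_rfl

lemma thermalCap_mono (n : ℕ) {K K' : Set (Spc n)} (h : K ⊆ K') :
    thermalCap n K ≤ thermalCap n K' := by
  apply sSup_le_sSup
  rintro m ⟨μ, hfm, hnull, hpot, hm⟩
  exact ⟨μ, hfm, le_antisymm (le_trans (measure_mono (Set.compl_subset_compl.2 h)) hnull.le)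
    zero_le, hpot, hm⟩

lemma cap_lower (n : ℕ) (K : Set (Spc n)) (hK : MeasurableSet K)
    (hfin : volume K ≠ ⊤) (hpos : volume K ≠ 0) :
    ENNReal.ofReal (1 / (1 + (4 * π) ^ (-(n:ℝ) / 2))) * volume K ^ ((n : ℝ) / ((n : ℝ) + 2))
      ≤ thermalCap n K := by
  set c0 : ℝ := (4 * π) ^ (-(n:ℝ) / 2) with hc0
  have hc0p : 0 < c0 := Real.rpow_pos_of_pos (by positivity) _
  set v := (volume K).toReal with hv
  have hvpos : 0 < v := ENNReal.toReal_pos hpos hfin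
  have hvolK : volume K = ENNReal.ofReal v := (ENNReal.ofReal_toReal hfin).symm
  set T : ℝ := v ^ (2 / ((n:ℝ) + 2)) with hTdef
  have hT : 0 < T := Real.rpow_pos_of_pos hvpos _
  have hn2 : (0:ℝ) < (n:ℝ) + 2 := by positivity
  set B : ℝ := (1 + c0) * T with hB
  have hBpos : 0 < B := mul_pos (by linarith) hT
  have hkey : T + (4 * π * T) ^ (-(n:ℝ)/2) * v = B := by
    have h1 : (4 * π * T) ^ (-(n:ℝ)/2) = c0 * T ^ (-(n:ℝ)/2) := by
      rw [hc0, ← Real.mul_rpow (by positivity) hT.le]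
    have h2 : T ^ (-(n:ℝ)/2) * v = T := by
      rw [hTdef, ← Real.rpow_mul hvpos.le]
      nth_rewrite 2 [show v = v ^ (1:ℝ) from (Real.rpow_one v).symm]
      rw [← Real.rpow_add hvpos]
      congr 1
      field_simp
      ring
    rw [h1, mul_assoc, h2, hB]
    ring
  have hBne0 : ENNReal.ofReal B ≠ 0 := (ENNReal.ofReal_pos.2 hBpos).ne'
  have hBfin : ENNReal.ofReal B ≠ ⊤ := ENNReal.ofReal_ne_top
  set μ : Measure (Spc n) := (ENNReal.ofReal B)⁻¹ • volume.restrict K with hμ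
  have hμuniv : μ Set.univ = (ENNReal.ofReal B)⁻¹ * volume K := by
    rw [hμ, Measure.smul_apply, Measure.restrict_apply_univ, smul_eq_mul]
  have hmem : μ Set.univ ∈ {m : ENNReal | ∃ μ : Measure (Spc n), IsFiniteMeasure μ ∧ μ Kᶜ = 0 ∧
      (∀ X : Spc n, ∫⁻ Y, ENNReal.ofReal (heatF n (X.1 - Y.1) (X.2 - Y.2)) ∂μ ≤ 1) ∧
      m = μ Set.univ} := by
    refine ⟨μ, ?_, ?_, ?_, rfl⟩
    · refine ⟨?_⟩
      rw [hμuniv, hvolK]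
      exact ENNReal.mul_lt_top (ENNReal.inv_lt_top.2 (ENNReal.ofReal_pos.2 hBpos))
        ENNReal.ofReal_lt_top
    · rw [hμ, Measure.smul_apply, Measure.restrict_apply hK.compl, smul_eq_mul]
      simp [Set.compl_inter_self]
    · intro X
      rw [hμ, lintegral_smul_measure]
      calc (ENNReal.ofReal B)⁻¹ * ∫⁻ Y, ENNReal.ofReal (heatF n (X.1 - Y.1) (X.2 - Y.2))
              ∂(volume.restrict K)
          ≤ (ENNReal.ofReal B)⁻¹ *
            (ENNReal.ofReal T + ENNReal.ofReal ((4 * π * T) ^ (-(n:ℝ)/2)) * volume K) := by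
            gcongr
            exact potential_le n K hT X
        _ = (ENNReal.ofReal B)⁻¹ * ENNReal.ofReal B := by
            congr 1
            rw [hvolK, ← ENNReal.ofReal_mul (by positivity), ← ENNReal.ofReal_add hT.le
              (by positivity), hkey]
        _ ≤ 1 := by
            rw [ENNReal.inv_mul_cancel hBne0 hBfin]
  calc ENNReal.ofReal (1 / (1 + c0)) * volume K ^ ((n : ℝ) / ((n : ℝ) + 2))
      = ENNReal.ofReal (1 / (1 + c0) * v ^ ((n : ℝ) / ((n : ℝ) + 2))) := by
        rw [hvolK, ENNReal.ofReal_rpow_of_pos hvpos,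
          ← ENNReal.ofReal_mul (by positivity)]
    _ = μ Set.univ := by
        rw [hμuniv, hvolK]
        rw [show (ENNReal.ofReal B)⁻¹ * ENNReal.ofReal v = ENNReal.ofReal v / ENNReal.ofReal B from
          by rw [div_eq_mul_inv, mul_comm], ← ENNReal.ofReal_div_of_pos hBpos]
        congr 1
        rw [hB, hTdef]
        rw [eq_div_iff (by positivity)]
        have hvv : v ^ ((n:ℝ)/((n:ℝ)+2)) * v ^ (2/((n:ℝ)+2)) = v := by
          rw [← Real.rpow_add hvpos, show (n:ℝ)/((n:ℝ)+2) + 2/((n:ℝ)+2) = 1 by field_simp,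
            Real.rpow_one]
        have h1c : (1:ℝ) + c0 ≠ 0 := by positivity
        calc 1/(1+c0) * v ^ ((n:ℝ)/((n:ℝ)+2)) * ((1+c0) * v ^ (2/((n:ℝ)+2)))
            = (1/(1+c0) * (1+c0)) * (v ^ ((n:ℝ)/((n:ℝ)+2)) * v ^ (2/((n:ℝ)+2))) := by ring
          _ = v := by rw [hvv, one_div_mul_cancel h1c, one_mul]
    _ ≤ thermalCap n K := le_sSup hmem


theorem thermalCap_lower_bound (n : ℕ) (hn : 1 ≤ n) :
    ∃ N > (0 : ℝ), ∀ K : Set (Spc n), MeasurableSet K →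
      ENNReal.ofReal N * volume K ^ ((n : ℝ) / ((n : ℝ) + 2)) ≤ thermalCap n K := by
  have hnr : (0:ℝ) < n := by exact_mod_cast hn
  have hp : 0 < (n:ℝ)/((n:ℝ)+2) := by positivity
  refine ⟨1 / (1 + (4 * π) ^ (-(n:ℝ) / 2)), by positivity, fun K hK => ?_⟩
  by_cases h0 : volume K = 0
  · rw [h0, ENNReal.zero_rpow_of_pos hp, mul_zero]; exact zero_le
  by_cases htop : volume K = ⊤
  · set s := fun i => K ∩ spanningSets (volume : Measure (Spc n)) i with hs
    have hmono : Monotone s := fun i j hij =>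
      Set.inter_subset_inter_right _ (monotone_spanningSets _ hij)
    have hcup : ⋃ i, s i = K := by
      rw [hs, ← Set.inter_iUnion, iUnion_spanningSets, Set.inter_univ]
    have hsupv : ⨆ i, volume (s i) = ⊤ := by
      rw [← hmono.directed_le.measure_iUnion, hcup, htop]
    have hub : ∀ i, ENNReal.ofReal (1 / (1 + (4 * π) ^ (-(n:ℝ) / 2))) *
        volume (s i) ^ ((n : ℝ) / ((n : ℝ) + 2)) ≤ thermalCap n K := fun i => by
      by_cases hz : volume (s i) = 0
      · rw [hz, ENNReal.zero_rpow_of_pos hp, mul_zero]; exact zero_le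
      · refine le_trans (cap_lower n (s i) (hK.inter (measurableSet_spanningSets _ i)) ?_ hz)
          (thermalCap_mono n Set.inter_subset_left)
        exact ((measure_mono Set.inter_subset_right).trans_lt
          (measure_spanningSets_lt_top _ i)).ne
    have hmain : ENNReal.ofReal (1 / (1 + (4 * π) ^ (-(n:ℝ) / 2))) *
        (⨆ i, volume (s i)) ^ ((n : ℝ) / ((n : ℝ) + 2)) ≤ thermalCap n K := by
      have hiso : (⨆ i, volume (s i)) ^ ((n : ℝ) / ((n : ℝ) + 2))
          = ⨆ i, volume (s i) ^ ((n : ℝ) / ((n : ℝ) + 2)) :=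
        OrderIso.map_iSup (ENNReal.orderIsoRpow _ hp) _
      rw [hiso, ENNReal.mul_iSup]
      exact iSup_le hub
    rw [htop, ← hsupv]
    exact hmain
  · exact cap_lower n K hK htop h0


end
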